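/- arXiv:2604.13664 — 2 statements merged into one kernel-verified Lean document; each statement's English description precedes it below -/
import Mathlib

section
/- The dominance relation satisfies the predecessor recurrence: for v ≠ r reachable from r, a vertex d ≠ v dominates v if and only if d dominates every predecessor p of v that is reachable from r. -/
/-- A directed path from `s` to `t` given as the list of visited vertices. -/
def IsPath {V : Type*} (E : V → V → Prop) (s t : V) (p : List V) : Prop :=
  p.head? = some s ∧ p.getLast? = some t ∧ p.Chain' E

/-- `t` is reachable from `s`. -/
def Reach {V : Type*} (E : V → V → Prop) (s t : V) : Prop :=
  ∃ p, IsPath E s t p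

/-- `d` dominates `v` (w.r.t. root `r`): every path from `r` to `v` contains `d`. -/
def Dom {V : Type*} (E : V → V → Prop) (r d v : V) : Prop :=
  ∀ p, IsPath E r v p → d ∈ p

lemma isPath_concat {V : Type*} {E : V → V → Prop} {r p v : V} {q : List V}
    (hq : IsPath E r p q) (hE : E p v) : IsPath E r v (q ++ [v]) := by
  obtain ⟨h1, h2, h3⟩ := hq
  have hne : q ≠ [] := by rintro rfl; simp at h1
  refine ⟨?_, ?_, ?_⟩
  · rw [List.head?_append_of_ne_nil _ hne] <;> try exact h1
  · simp [List.getLast?_append]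
  · unfold List.Chain'; rw [List.isChain_append]
    refine ⟨h3, List.isChain_singleton v, ?_⟩
    intro x hx y hy
    simp only [List.head?_cons, Option.mem_def, Option.some.injEq] at hy
    subst hy
    simp only [Option.mem_def, h2, Option.some.injEq] at hx
    subst hx
    exact hE

/-- The predecessor recurrence for dominance: for `v ≠ r` reachable from `r`,
a vertex `d ≠ v` dominates `v` iff `d` dominates every reachable predecessor of `v`. -/
theorem dom_pred_recurrence {V : Type*} (E : V → V → Prop) (r v d : V)
    (hv : Reach E r v) (hvr : v ≠ r) (hdv : d ≠ v) :
    Dom E r d v ↔ ∀ p, E p v → Reach E r p → Dom E r d p := by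
  constructor
  · intro hdom p hE hp q hq
    have := hdom (q ++ [v]) (isPath_concat hq hE)
    rcases List.mem_append.mp this with h | h
    · exact h
    · simp at h; exact absurd h hdv
  · intro H π hπ
    obtain ⟨h1, h2, h3⟩ := hπ
    have hne : π ≠ [] := by rintro rfl; simp at h1
    -- π = dropLast ++ [v]
    have hsplit : π = π.dropLast ++ [v] := by
      conv_lhs => rw [← List.dropLast_append_getLast hne]
      congr 1
      simp [List.getLast?_eq_getLast hne] at h2
      rw [h2]
    have hdne : π.dropLast ≠ [] := by
      intro h
      rw [hsplit, h] at h1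
      simp at h1
      exact hvr h1
    set q := π.dropLast with hq
    have hhead : q.head? = some r := by
      rw [hsplit, List.head?_append_of_ne_nil _ hdne] at h1
      exact h1
    set p := q.getLast hdne with hp
    have hqpath : IsPath E r p q := by
      refine ⟨hhead, List.getLast?_eq_getLast hdne ▸ rfl, ?_⟩
      rw [hsplit] at h3
      exact (List.isChain_append.mp h3).1
    have hEpv : E p v := by
      rw [hsplit] at h3
      have := (List.isChain_append.mp h3).2.2
      apply this
      · rw [List.getLast?_eq_getLast hdne]; rfl
      · rfl
    have : d ∈ q := H p hEpv ⟨q, hqpath⟩ q hqpath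
    rw [hsplit]
    exact List.mem_append.mpr (Or.inl this)
end

section
/- If the immediate dominator function is derived from the dominance relation on a rooted graph where all vertices are reachable, then every vertex v ≠ r has a unique immediate dominator: a dominator d ≠ v of v such that every other dominator of v distinct from v dominates d. -/
section Aux

variable {V : Type*} {E : V → V → Prop}

/-- split a list at the first occurrence of an element -/
lemma mem_first_split {x : V} {p : List V} (hx : x ∈ p) :
    ∃ a c, p = a ++ x :: c ∧ x ∉ a := by
  classical
  induction p with
  | nil => simp at hx
  | cons y p ih =>
    by_cases h : x = y
    · exact ⟨[], p, by simp [h], by simp⟩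
    · have hx' : x ∈ p := by
        rcases List.mem_cons.1 hx with h1 | h1
        · exact absurd h1 h
        · exact h1
      obtain ⟨a, c, rfl, ha⟩ := ih hx'
      exact ⟨y :: a, c, rfl, by simp [ha, h]⟩

/-- split a list at the last element satisfying P -/
lemma last_sat {P : V → Prop} {p : List V} (h : ∃ x ∈ p, P x) :
    ∃ a d c, p = a ++ d :: c ∧ P d ∧ ∀ x ∈ c, ¬ P x := by
  classical
  induction p with
  | nil => simp at h
  | cons y p ih =>
    by_cases h' : ∃ x ∈ p, P x
    · obtain ⟨a, d, c, rfl, hd, hc⟩ := ih h'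
      exact ⟨y :: a, d, c, rfl, hd, hc⟩
    · refine ⟨[], y, p, rfl, ?_, ?_⟩
      · obtain ⟨x, hx, hPx⟩ := h
        rcases List.mem_cons.1 hx with rfl | h1
        · exact hPx
        · exact absurd ⟨x, h1, hPx⟩ h'
      · intro x hx hPx
        exact h' ⟨x, hx, hPx⟩

lemma isPath_prefix {r t x : V} {a c : List V} (hp : IsPath E r t (a ++ x :: c)) :
    IsPath E r x (a ++ [x]) := by
  obtain ⟨h1, h2, h3⟩ := hp
  refine ⟨?_, ?_, ?_⟩
  · cases a with
    | nil => simpa using h1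
    | cons y a => simpa using h1
  · simp
  · exact h3.prefix ⟨c, by simp⟩

lemma isPath_concat_s18 {r t d : V} {q a c : List V} (hq : IsPath E r d q)
    (hp : IsPath E r t (a ++ d :: c)) : IsPath E r t (q ++ c) := by
  obtain ⟨hq1, hq2, hq3⟩ := hq
  obtain ⟨hp1, hp2, hp3⟩ := hp
  have hqne : q ≠ [] := by rintro rfl; simp at hq1
  have hch : List.Chain' E (d :: c) := hp3.suffix ⟨a, rfl⟩
  refine ⟨?_, ?_, ?_⟩
  · rcases List.exists_cons_of_ne_nil hqne with ⟨y, q', rfl⟩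
    simpa using hq1
  · cases c with
    | nil =>
      have hdt : d = t := by simpa using hp2
      simp only [List.append_nil]
      rw [hq2, hdt]
    | cons y c' =>
      obtain ⟨w, hw⟩ := Option.isSome_iff_exists.1
        (List.getLast?_isSome.2 (show (y :: c') ≠ [] by simp))
      rw [List.getLast?_append, hw]
      rw [List.getLast?_append, List.getLast?_cons_cons, hw] at hp2
      exact hp2
  · show List.IsChain E (q ++ c); rw [List.isChain_append]
    refine ⟨hq3, hch.tail, ?_⟩
    intro x hx y hy
    have hxd : x = d := by rw [hq2] at hx; exact Option.some_inj.1 hx.symm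
    subst hxd
    cases c with
    | nil => simp at hy
    | cons z c' =>
      have : y = z := (by simpa using hy : z = y).symm
      subst this
      exact (List.isChain_cons_cons.1 hch).1

end Aux

/-- Every non-root vertex of a finite rooted graph with all vertices reachable
has a unique immediate dominator. -/
theorem idom_exists_unique {V : Type*} [Fintype V] (E : V → V → Prop) (r v : V)
    (hreach : ∀ u, Reach E r u) (hvr : v ≠ r) :
    ∃! d : V, Dom E r d v ∧ d ≠ v ∧
      ∀ e, Dom E r e v → e ≠ v → Dom E r e d := by
  classical
  obtain ⟨p, hp⟩ := hreach v
  have head_mem : ∀ (q : List V) (t : V), IsPath E r t q → r ∈ q := by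
    intro q t hq
    cases q with
    | nil => simp [IsPath] at hq
    | cons y q' =>
      have : y = r := by simpa [IsPath] using hq.1
      simp [this]
  have hrdom : Dom E r r v := fun q hq => head_mem q v hq
  have hrp : ∃ x ∈ p, Dom E r x v ∧ x ≠ v := ⟨r, head_mem p v hp, hrdom, hvr.symm⟩
  obtain ⟨a, d, c, hsplit, ⟨hddom, hdv⟩, hc⟩ := last_sat hrp
  have key : ∀ e, Dom E r e v → e ≠ v → Dom E r e d := by
    intro e he hev q hq
    have hqc : IsPath E r v (q ++ c) := isPath_concat_s18 hq (hsplit ▸ hp)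
    have : e ∈ q ++ c := he _ hqc
    rcases List.mem_append.1 this with h1 | h1
    · exact h1
    · exact absurd ⟨he, hev⟩ (hc e h1)
  refine ⟨d, ⟨hddom, hdv, key⟩, ?_⟩
  rintro d' ⟨hd'dom, hd'v, hd'key⟩
  -- mutual dominance
  have h1 : Dom E r d d' := hd'key d hddom hdv
  have h2 : Dom E r d' d := key d' hd'dom hd'v
  by_contra hne
  obtain ⟨p', hp'⟩ := hreach d'
  have hdp' : d ∈ p' := h1 p' hp'
  obtain ⟨a', c', rfl, hda'⟩ := mem_first_split hdp'
  have hpa : IsPath E r d (a' ++ [d]) := isPath_prefix hp'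
  have hd'pa : d' ∈ a' ++ [d] := h2 _ hpa
  have hd'a' : d' ∈ a' := by
    rcases List.mem_append.1 hd'pa with h | h
    · exact h
    · exact absurd (by simpa using h) hne
  obtain ⟨a₁, a₂, rfl, _⟩ := mem_first_split hd'a'
  have hpb : IsPath E r d' (a₁ ++ [d']) := by
    have : IsPath E r d' (a₁ ++ d' :: (a₂ ++ d :: c')) := by simpa using hp'
    exact isPath_prefix this
  have hdpb : d ∈ a₁ ++ [d'] := h1 _ hpb
  rcases List.mem_append.1 hdpb with h | h
  · exact hda' (by simp [h])
  · exact hne ((by simpa using h : d = d')).symm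
end
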